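/- Let ω ∈ ℕ, let P be a finite set of points of the grid {0,…,2^ω−1}², and let A_P be a list of the points of P sorted in increasing order of morton_ω. Then for every dyadic cell C of the grid, the set of indices { i : A_P[i] ∈ C } is a contiguous range of indices; i.e. the points of P lying in any quadtree cell occupy a contiguous subarray of the Morton-sorted array. -/

import Mathlib

/-- The Morton (Z-order) encoding of a pair of `ω`-bit numbers, obtained by
interleaving binary digits: `morton ω x y = Σ_{i<ω} (bitᵢ(x)·2^{2i+1} + bitᵢ(y)·2^{2i})`. -/
def morton (ω : ℕ) (x y : ℕ) : ℕ :=
  ∑ i ∈ Finset.range ω,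
    ((Nat.testBit x i).toNat * 2 ^ (2 * i + 1) + (Nat.testBit y i).toNat * 2 ^ (2 * i))

lemma morton_lt (k x y : ℕ) : morton k x y < 4 ^ k := by
  induction k with
  | zero => simp [morton]
  | succ n ih =>
    rw [morton, Finset.sum_range_succ, ← morton]
    have h1 : (Nat.testBit x n).toNat ≤ 1 := Bool.toNat_le _
    have h2 : (Nat.testBit y n).toNat ≤ 1 := Bool.toNat_le _
    have e1 : (2:ℕ) ^ (2*n) = 4 ^ n := by rw [pow_mul]; norm_num
    have e2 : (2:ℕ) ^ (2*n+1) = 2 * 4 ^ n := by rw [pow_succ, e1]; ring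
    have e3 : (4:ℕ) ^ (n+1) = 4 * 4 ^ n := by ring
    rw [e1, e2, e3]
    nlinarith [ih]

lemma morton_split (k m x y : ℕ) :
    morton (k + m) x y
      = morton k (x % 2^k) (y % 2^k) + 4 ^ k * morton m (x / 2^k) (y / 2^k) := by
  rw [morton, Finset.sum_range_add]
  congr 1
  · rw [morton]
    apply Finset.sum_congr rfl
    intro i hi
    rw [Finset.mem_range] at hi
    rw [Nat.testBit_mod_two_pow, Nat.testBit_mod_two_pow]
    simp [hi]
  · rw [morton, Finset.mul_sum]
    apply Finset.sum_congr rfl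
    intro i _
    have hx : (x / 2^k).testBit i = x.testBit (k+i) := by
      simp [Nat.testBit, Nat.shiftRight_eq_div_pow, Nat.div_div_eq_div_mul, pow_add]
    have hy : (y / 2^k).testBit i = y.testBit (k+i) := by
      simp [Nat.testBit, Nat.shiftRight_eq_div_pow, Nat.div_div_eq_div_mul, pow_add]
    have e1 : (2:ℕ) ^ (2*(k+i)+1) = 4^k * 2^(2*i+1) := by
      rw [show 2*(k+i)+1 = 2*k + (2*i+1) by ring, pow_add, pow_mul]; norm_num
    have e2 : (2:ℕ) ^ (2*(k+i)) = 4^k * 2^(2*i) := by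
      rw [show 2*(k+i) = 2*k + 2*i by ring, pow_add, pow_mul]; norm_num
    rw [hx, hy, e1, e2]
    ring

lemma morton_one (u v : ℕ) : morton 1 u v = 2 * (u % 2) + v % 2 := by
  have h : ∀ n : ℕ, (Nat.testBit n 0).toNat = n % 2 := by
    intro n
    rw [Nat.testBit_zero]
    rcases Nat.mod_two_eq_zero_or_one n with h | h <;> simp [h]
  simp only [morton, Finset.sum_range_one, h]
  ring_nf

lemma div_eq_of_cell (N c x : ℕ) (hN : 0 < N) (h1 : N * c ≤ x) (h2 : x < N * c + N) :
    x / N = c := by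
  have hd := Nat.div_add_mod x N
  have hm := Nat.mod_lt x hN
  rcases Nat.lt_trichotomy (x / N) c with h | h | h
  · have : N * (x / N) + N ≤ N * c := by
      calc N * (x / N) + N = N * (x / N + 1) := by ring
        _ ≤ N * c := Nat.mul_le_mul_left N h
    omega
  · exact h
  · have : N * c + N ≤ N * (x / N) := by
      calc N * c + N = N * (c + 1) := by ring
        _ ≤ N * (x / N) := Nat.mul_le_mul_left N h
    omega

lemma cell_of_div_eq (N c x : ℕ) (h : x / N = c) (hN : 0 < N) :
    N * c ≤ x ∧ x < N * c + N := by
  have hd := Nat.div_add_mod x N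
  have hm := Nat.mod_lt x hN
  rw [h] at hd
  omega

lemma morton_inj : ∀ (ω x y x' y' : ℕ), x < 2^ω → y < 2^ω → x' < 2^ω → y' < 2^ω →
    morton ω x y = morton ω x' y' → x = x' ∧ y = y' := by
  intro ω
  induction ω with
  | zero => intro x y x' y' hx hy hx' hy' _; simp at hx hy hx' hy'; omega
  | succ m ih =>
    intro x y x' y' hx hy hx' hy' h
    have he : m + 1 = 1 + m := by omega
    rw [he] at hx hy hx' hy' h
    have hp : (2:ℕ)^(1+m) = 2 * 2^m := by rw [pow_add]; ring
    have e1 := morton_split 1 m x y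
    have e2 := morton_split 1 m x' y'
    simp only [pow_one, morton_one] at e1 e2
    norm_num at e1 e2
    obtain ⟨hx1, hy1⟩ := ih (x/2) (y/2) (x'/2) (y'/2)
      (by omega) (by omega) (by omega) (by omega) (by omega)
    constructor <;> omega

lemma cell_iff (ω k : ℕ) (hk : k ≤ ω) (a b x y : ℕ)
    (ha : a < 2^ω) (hb : b < 2^ω)
    (hda : 2^k ∣ a) (hdb : 2^k ∣ b) (hx : x < 2^ω) (hy : y < 2^ω) :
    (a ≤ x ∧ x < a + 2^k ∧ b ≤ y ∧ y < b + 2^k) ↔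
    (4^k * morton (ω-k) (a / 2^k) (b / 2^k) ≤ morton ω x y ∧
     morton ω x y < 4^k * morton (ω-k) (a / 2^k) (b / 2^k) + 4^k) := by
  obtain ⟨m, rfl⟩ : ∃ m, ω = k + m := ⟨ω - k, by omega⟩
  have hm : k + m - k = m := by omega
  rw [hm]
  have hN : 0 < 2^k := pow_pos (by norm_num) k
  have h4 : 0 < 4^k := pow_pos (by norm_num) k
  have hsx := morton_split k m x y
  have hpkm : (2:ℕ)^(k+m) = 2^k * 2^m := pow_add 2 k m
  obtain ⟨c, rfl⟩ := hda
  obtain ⟨d, rfl⟩ := hdb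
  rw [Nat.mul_div_cancel_left c hN, Nat.mul_div_cancel_left d hN]
  constructor
  · rintro ⟨h1, h2, h3, h4'⟩
    have hxa : x / 2^k = c := div_eq_of_cell _ _ _ hN h1 (by omega)
    have hyb : y / 2^k = d := div_eq_of_cell _ _ _ hN h3 (by omega)
    rw [hsx, hxa, hyb]
    have hr := morton_lt k (x % 2^k) (y % 2^k)
    set L := 4^k * morton m c d
    omega
  · rintro ⟨h1, h2⟩
    have hr := morton_lt k (x % 2^k) (y % 2^k)
    have hQ : morton (k+m) x y / 4^k = morton m c d :=
      div_eq_of_cell _ _ _ h4 h1 h2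
    have hB : morton (k+m) x y / 4^k = morton m (x / 2^k) (y / 2^k) := by
      apply div_eq_of_cell _ _ _ h4
      · rw [hsx]; omega
      · rw [hsx]; omega
    have heq : morton m (x / 2^k) (y / 2^k) = morton m c d := by rw [← hB, hQ]
    have hcx : c < 2^m := by
      have := cell_of_div_eq (2^k) c (2^k * c) (Nat.mul_div_cancel_left c hN) hN
      nlinarith
    have hcy : d < 2^m := by
      have := cell_of_div_eq (2^k) d (2^k * d) (Nat.mul_div_cancel_left d hN) hN
      nlinarith
    have hpkm2 : (2:ℕ)^(k+m) = 2^m * 2^k := by rw [pow_add]; ring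
    have hdx : x / 2^k < 2^m := by
      rw [Nat.div_lt_iff_lt_mul hN, ← hpkm2]; exact hx
    have hdy : y / 2^k < 2^m := by
      rw [Nat.div_lt_iff_lt_mul hN, ← hpkm2]; exact hy
    obtain ⟨hx1, hy1⟩ := morton_inj m (x / 2^k) (y / 2^k) c d hdx hdy hcx hcy heq
    have c1 := cell_of_div_eq (2^k) c x hx1 hN
    have c2 := cell_of_div_eq (2^k) d y hy1 hN
    omega

lemma nat_convex_Ico (S : Set ℕ) (n : ℕ) (hb : ∀ i ∈ S, i < n)
    (hc : ∀ ⦃i j m : ℕ⦄, i ∈ S → m ∈ S → i ≤ j → j ≤ m → j ∈ S) :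
    ∃ l u : ℕ, S = Set.Ico l u := by
  by_cases hne : S.Nonempty
  · have hbdd : BddAbove S := ⟨n, fun i hi => (hb i hi).le⟩
    refine ⟨sInf S, sSup S + 1, ?_⟩
    ext j
    simp only [Set.mem_Ico]
    constructor
    · intro hj
      exact ⟨csInf_le (OrderBot.bddBelow S) hj, Nat.lt_succ_of_le (le_csSup hbdd hj)⟩
    · rintro ⟨h1, h2⟩
      exact hc (Nat.sInf_mem hne) (Nat.sSup_mem hne hbdd) h1 (Nat.lt_succ_iff.mp h2)
  · rw [Set.not_nonempty_iff_eq_empty] at hne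
    exact ⟨0, 0, by rw [hne, Set.Ico_self]⟩

/-- Let `P` be a finite set of points of the grid `{0,…,2^ω−1}²` and let `A` be a
list of the points of `P` sorted in increasing order of `morton ω`.  Then for every
level-`k` dyadic cell `{a,…,a+2^k−1} × {b,…,b+2^k−1}` of the grid (`k ≤ ω`,
`a, b < 2^ω` divisible by `2^k`), the set of indices `i` with `A[i]` in the cell is
a contiguous range of indices: the points of `P` lying in any quadtree cell occupy a
contiguous subarray of the Morton-sorted array. -/
theorem morton_sorted_cell_contiguous (ω k : ℕ) (hk : k ≤ ω) (P : Finset (ℕ × ℕ))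
    (hP : ∀ p ∈ P, p.1 < 2 ^ ω ∧ p.2 < 2 ^ ω)
    (A : List (ℕ × ℕ)) (hnodup : A.Nodup) (hmem : ∀ p, p ∈ A ↔ p ∈ P)
    (hsorted : A.Pairwise fun p p' => morton ω p.1 p.2 ≤ morton ω p'.1 p'.2)
    (a b : ℕ) (ha : a < 2 ^ ω) (hb : b < 2 ^ ω) (hda : 2 ^ k ∣ a) (hdb : 2 ^ k ∣ b) :
    ∃ l u : ℕ,
      {i : ℕ | ∃ h : i < A.length,
        a ≤ (A.get ⟨i, h⟩).1 ∧ (A.get ⟨i, h⟩).1 < a + 2 ^ k ∧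
        b ≤ (A.get ⟨i, h⟩).2 ∧ (A.get ⟨i, h⟩).2 < b + 2 ^ k} = Set.Ico l u := by
  have hbound : ∀ (i : ℕ) (h : i < A.length),
      (A.get ⟨i, h⟩).1 < 2^ω ∧ (A.get ⟨i, h⟩).2 < 2^ω := by
    intro i h
    exact hP _ ((hmem _).1 (A.get_mem ⟨i, h⟩))
  apply nat_convex_Ico _ A.length
  · rintro i ⟨h, -⟩; exact h
  · rintro i j m ⟨hi, hi1, hi2, hi3, hi4⟩ ⟨hm, hm1, hm2, hm3, hm4⟩ hij hjm
    have hj : j < A.length := lt_of_le_of_lt hjm hm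
    refine ⟨hj, ?_⟩
    obtain ⟨hbi1, hbi2⟩ := hbound i hi
    obtain ⟨hbj1, hbj2⟩ := hbound j hj
    obtain ⟨hbm1, hbm2⟩ := hbound m hm
    have key_i := (cell_iff ω k hk a b _ _ ha hb hda hdb hbi1 hbi2).1
      ⟨hi1, hi2, hi3, hi4⟩
    have key_m := (cell_iff ω k hk a b _ _ ha hb hda hdb hbm1 hbm2).1
      ⟨hm1, hm2, hm3, hm4⟩
    have mono : ∀ (p q : ℕ) (hp : p < A.length) (hq : q < A.length), p ≤ q →
        morton ω (A.get ⟨p, hp⟩).1 (A.get ⟨p, hp⟩).2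
          ≤ morton ω (A.get ⟨q, hq⟩).1 (A.get ⟨q, hq⟩).2 := by
      intro p q hp hq hpq
      rcases eq_or_lt_of_le hpq with rfl | hlt
      · rfl
      · exact hsorted.rel_get_of_lt (by exact hlt)
    have h1 := mono i j hi hj hij
    have h2 := mono j m hj hm hjm
    have := (cell_iff ω k hk a b _ _ ha hb hda hdb hbj1 hbj2).2
      ⟨le_trans key_i.1 h1, lt_of_le_of_lt h2 key_m.2⟩
    tauto
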